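/- Let ξ be a random variable with symmetric distribution (ξ and -ξ have the same law) and let λ ∈ ℝ. Then E[exp(λξ - (λ²/2)ξ²)] ≤ 1, with equality if and only if ξ = 0 almost surely (for λ ≠ 0). -/

import Mathlib

open MeasureTheory

lemma cosh_lt_exp_half_sq {x : ℝ} (hx : x ≠ 0) : Real.cosh x < Real.exp (x ^ 2 / 2) := by
  rw [Real.cosh_eq_tsum, Real.exp_eq_exp_ℝ, NormedSpace.exp_eq_tsum (𝕂 := ℝ)]
  have hterm : ∀ i : ℕ, x ^ (2 * i) / ((2 * i).factorial : ℝ) ≤ ((i.factorial : ℝ))⁻¹ • (x ^ 2 / 2) ^ i := by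
    intro i
    simp only [div_pow, pow_mul, smul_eq_mul, inv_mul_eq_div, div_div]
    gcongr
    norm_cast
    exact Nat.two_pow_mul_factorial_le_factorial_two_mul _
  refine Summable.tsum_lt_tsum hterm (i := 2) ?_ x.hasSum_cosh.summable
    (NormedSpace.expSeries_summable' (x ^ 2 / 2))
  have hx4 : 0 < x ^ 4 := by positivity
  simp only [smul_eq_mul]
  norm_num [Nat.factorial]
  nlinarith [hx4]

theorem integral_exp_le_one_of_symm
    {Ω : Type*} {m : MeasurableSpace Ω} {μ : Measure Ω} [IsProbabilityMeasure μ]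
    (ξ : Ω → ℝ) (hξ : Measurable ξ)
    (hsymm : Measure.map ξ μ = Measure.map (fun ω => -ξ ω) μ)
    (l : ℝ) :
    (∫ ω, Real.exp (l * ξ ω - l ^ 2 / 2 * (ξ ω) ^ 2) ∂μ ≤ 1) ∧
    (l ≠ 0 →
      ((∫ ω, Real.exp (l * ξ ω - l ^ 2 / 2 * (ξ ω) ^ 2) ∂μ = 1) ↔ ξ =ᵐ[μ] 0)) := by
  set f : ℝ → ℝ := fun x => Real.exp (l * x - l ^ 2 / 2 * x ^ 2) with hf
  have hfc : Continuous f := by fun_prop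
  have hfbd : ∀ x, f x ≤ Real.exp (1 / 2) := by
    intro x
    apply Real.exp_le_exp.2
    nlinarith [sq_nonneg (l * x - 1)]
  -- integrability
  have hint : ∀ g : Ω → ℝ, Measurable g → Integrable (fun ω => f (g ω)) μ := by
    intro g hg
    refine Integrable.mono' (integrable_const (Real.exp (1 / 2)))
      (hfc.measurable.comp hg).aestronglyMeasurable (ae_of_all _ fun ω => ?_)
    rw [Real.norm_eq_abs, abs_of_pos (Real.exp_pos _)]
    exact hfbd _
  have hint1 := hint ξ hξ
  have hint2 := hint (fun ω => -ξ ω) hξ.neg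
  -- symmetry: the two integrals agree
  have hmapeq : ∫ ω, f (ξ ω) ∂μ = ∫ ω, f (-ξ ω) ∂μ := by
    rw [← integral_map hξ.aemeasurable hfc.aestronglyMeasurable,
      ← integral_map (φ := fun ω => -ξ ω) hξ.neg.aemeasurable hfc.aestronglyMeasurable, hsymm]
  -- pointwise bound for the symmetrized integrand
  have hkey : ∀ x : ℝ, f x + f (-x) = 2 * (Real.exp (-(l ^ 2 / 2 * x ^ 2)) * Real.cosh (l * x)) := by
    intro x
    rw [Real.cosh_eq, show (2:ℝ) * (Real.exp (-(l ^ 2 / 2 * x ^ 2)) *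
        ((Real.exp (l * x) + Real.exp (-(l * x))) / 2)) =
        Real.exp (-(l ^ 2 / 2 * x ^ 2)) * Real.exp (l * x) +
        Real.exp (-(l ^ 2 / 2 * x ^ 2)) * Real.exp (-(l * x)) by ring,
      ← Real.exp_add, ← Real.exp_add]
    simp only [hf]
    ring_nf
  have hle2 : ∀ x : ℝ, f x + f (-x) ≤ 2 := by
    intro x
    rw [hkey]
    have h1 : Real.cosh (l * x) ≤ Real.exp ((l * x) ^ 2 / 2) := Real.cosh_le_exp_half_sq _
    have h2 : Real.exp (-(l ^ 2 / 2 * x ^ 2)) * Real.cosh (l * x) ≤ 1 := by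
      calc Real.exp (-(l ^ 2 / 2 * x ^ 2)) * Real.cosh (l * x)
          ≤ Real.exp (-(l ^ 2 / 2 * x ^ 2)) * Real.exp ((l * x) ^ 2 / 2) := by
            exact mul_le_mul_of_nonneg_left h1 (Real.exp_pos _).le
        _ = 1 := by rw [← Real.exp_add]; rw [show -(l ^ 2 / 2 * x ^ 2) + (l * x) ^ 2 / 2 = 0 by ring, Real.exp_zero]
    linarith
  have hlt2 : ∀ x : ℝ, l ≠ 0 → x ≠ 0 → f x + f (-x) < 2 := by
    intro x hl hx
    rw [hkey]
    have h1 : Real.cosh (l * x) < Real.exp ((l * x) ^ 2 / 2) :=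
      cosh_lt_exp_half_sq (mul_ne_zero hl hx)
    have h2 : Real.exp (-(l ^ 2 / 2 * x ^ 2)) * Real.cosh (l * x) < 1 := by
      calc Real.exp (-(l ^ 2 / 2 * x ^ 2)) * Real.cosh (l * x)
          < Real.exp (-(l ^ 2 / 2 * x ^ 2)) * Real.exp ((l * x) ^ 2 / 2) := by
            exact mul_lt_mul_of_pos_left h1 (Real.exp_pos _)
        _ = 1 := by rw [← Real.exp_add]; rw [show -(l ^ 2 / 2 * x ^ 2) + (l * x) ^ 2 / 2 = 0 by ring, Real.exp_zero]
    linarith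
  -- express the integral as the symmetrized one
  have havg : ∫ ω, f (ξ ω) ∂μ = ∫ ω, (f (ξ ω) + f (-ξ ω)) / 2 ∂μ := by
    rw [integral_div, integral_add hint1 hint2, ← hmapeq]
    ring
  have hintavg : Integrable (fun ω => (f (ξ ω) + f (-ξ ω)) / 2) μ := (hint1.add hint2).div_const 2
  have hIle : ∫ ω, f (ξ ω) ∂μ ≤ 1 := by
    rw [havg]
    calc ∫ ω, (f (ξ ω) + f (-ξ ω)) / 2 ∂μ ≤ ∫ _, (1 : ℝ) ∂μ := by
          refine integral_mono hintavg (integrable_const 1) fun ω => ?_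
          have := hle2 (ξ ω)
          linarith
      _ = 1 := by simp
  refine ⟨hIle, fun hl => ⟨fun heq => ?_, fun hz => ?_⟩⟩
  · -- equality implies ξ = 0 a.e.
    have h0 : ∫ ω, (1 - (f (ξ ω) + f (-ξ ω)) / 2) ∂μ = 0 := by
      rw [integral_sub (integrable_const 1) hintavg, ← havg, heq]
      simp
    have hae : (fun ω => 1 - (f (ξ ω) + f (-ξ ω)) / 2) =ᵐ[μ] 0 :=
      (integral_eq_zero_iff_of_nonneg_ae (ae_of_all _ fun ω => by
        have := hle2 (ξ ω); simp only [Pi.sub_apply, Pi.zero_apply]; linarith)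
        ((integrable_const 1).sub hintavg)).mp h0
    filter_upwards [hae] with ω hω
    by_contra hxne
    have := hlt2 (ξ ω) hl hxne
    simp only [Pi.zero_apply] at hω
    linarith
  · -- ξ = 0 a.e. implies equality
    have : (fun ω => f (ξ ω)) =ᵐ[μ] fun _ => 1 := by
      filter_upwards [hz] with ω hω
      simp only [Pi.zero_apply] at hω
      simp [hf, hω]
    rw [integral_congr_ae this]
    simp
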